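/- Let (X,μ) and (Y,ν) be σ-finite measure spaces, f ∈ L¹(X,ℝⁿ), g ∈ L¹(Y,ℝⁿ). If f is matrix majorized by g (there exists a stochastic operator S : L¹(Y)→L¹(X) with S g_i = f_i componentwise), then ∫_X φ(f(x)) dμ(x) ≤ ∫_Y φ(g(y)) dν(y) for every nonnegative sublinear functional φ : ℝⁿ → [0,∞). -/

import Mathlib

open MeasureTheory


lemma pi_repr {n : ℕ} (v : Fin n → ℝ) :
    v = ∑ i : Fin n, v i • (Pi.single i 1 : Fin n → ℝ) := by
  classical
  ext j
  simp [Finset.sum_apply, Pi.single_apply, mul_ite, Finset.sum_ite_eq]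

section Aux

variable {n : ℕ} {φ : (Fin n → ℝ) → ℝ}

lemma phi_zero (hhom : ∀ l : ℝ, 0 ≤ l → ∀ v, φ (l • v) = l * φ v) : φ 0 = 0 := by
  have := hhom 0 le_rfl 0
  simpa using this

lemma phi_finset_sum (hhom : ∀ l : ℝ, 0 ≤ l → ∀ v, φ (l • v) = l * φ v)
    (hsub : ∀ v w, φ (v + w) ≤ φ v + φ w)
    {ι : Type*} (s : Finset ι) (w : ι → (Fin n → ℝ)) :
    φ (∑ i ∈ s, w i) ≤ ∑ i ∈ s, φ (w i) := by
  classical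
  induction s using Finset.induction_on with
  | empty => simp [phi_zero hhom]
  | insert _ _ h ih =>
      rw [Finset.sum_insert h, Finset.sum_insert h]
      exact (hsub _ _).trans (by linarith)

lemma phi_le_C (hnonneg : ∀ v, 0 ≤ φ v)
    (hhom : ∀ l : ℝ, 0 ≤ l → ∀ v, φ (l • v) = l * φ v)
    (hsub : ∀ v w, φ (v + w) ≤ φ v + φ w) (v : Fin n → ℝ) :
    φ v ≤ (∑ i : Fin n, (φ (Pi.single i 1) + φ (-Pi.single i 1))) * ‖v‖ := by
  classical
  have hrepr := pi_repr v
  calc φ v = φ (∑ i : Fin n, v i • (Pi.single i 1 : Fin n → ℝ)) := by rw [← hrepr]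
    _ ≤ ∑ i : Fin n, φ (v i • (Pi.single i 1 : Fin n → ℝ)) := phi_finset_sum hhom hsub _ _
    _ ≤ ∑ i : Fin n, ‖v‖ * (φ (Pi.single i 1) + φ (-Pi.single i 1)) := by
        apply Finset.sum_le_sum
        intro i _
        have hle : |v i| ≤ ‖v‖ := by
          simpa using norm_le_pi_norm v i
        have habs : 0 ≤ |v i| := abs_nonneg _
        rcases le_or_gt 0 (v i) with h | h
        · rw [hhom _ h]
          have : v i * φ (Pi.single i 1) ≤ ‖v‖ * (φ (Pi.single i 1) + φ (-Pi.single i 1)) := by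
            have h1 := hnonneg (Pi.single i 1)
            have h2 := hnonneg (-Pi.single i (1:ℝ))
            nlinarith [abs_of_nonneg h]
          exact this
        · have heq : v i • (Pi.single i 1 : Fin n → ℝ) = (-(v i)) • (-(Pi.single i 1 : Fin n → ℝ)) := by
            simp
          rw [heq, hhom _ (by linarith)]
          have h1 := hnonneg (Pi.single i (1:ℝ))
          have h2 := hnonneg (-(Pi.single i 1 : Fin n → ℝ))
          nlinarith [abs_of_neg h]
    _ = (∑ i : Fin n, (φ (Pi.single i 1) + φ (-Pi.single i 1))) * ‖v‖ := by
        rw [← Finset.mul_sum, mul_comm]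

lemma phi_subgradient (hnonneg : ∀ v, 0 ≤ φ v)
    (hhom : ∀ l : ℝ, 0 ≤ l → ∀ v, φ (l • v) = l * φ v)
    (hsub : ∀ v w, φ (v + w) ≤ φ v + φ w) (s : Fin n → ℝ) (hs : s ≠ 0) :
    ∃ a : Fin n → ℝ, (∀ v, (∑ i, a i * v i) ≤ φ v) ∧ φ s ≤ ∑ i, a i * s i := by
  classical
  set p : (Fin n → ℝ) →ₗ.[ℝ] ℝ := LinearPMap.mkSpanSingleton s (φ s) hs with hp
  have hdom : ∀ x : p.domain, ∃ c : ℝ, (x : Fin n → ℝ) = c • s := by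
    intro x
    have hx : (x : Fin n → ℝ) ∈ Submodule.span ℝ {s} := x.2
    rcases Submodule.mem_span_singleton.1 hx with ⟨c, hc⟩
    exact ⟨c, hc.symm⟩
  have hpapp : ∀ (c : ℝ) (h : c • s ∈ p.domain), p ⟨c • s, h⟩ = c * φ s := by
    intro c h
    have := LinearPMap.mkSpanSingleton'_apply s (φ s) _ c h
    rw [smul_eq_mul] at this
    exact this
  have hf : ∀ x : p.domain, p x ≤ φ x := by
    intro x
    obtain ⟨c, hc⟩ := hdom x
    have hmem : c • s ∈ p.domain := hc ▸ x.2
    have hx : x = ⟨c • s, hmem⟩ := Subtype.ext hc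
    rw [hx, hpapp c hmem]
    rcases le_or_gt 0 c with h | h
    · rw [hhom c h]
    · have h1 : φ (c • s) = (-c) * φ (-s) := by
        have : c • s = (-c) • (-s) := by simp
        rw [this, hhom _ (by linarith)]
      have h2 : 0 ≤ φ s + φ (-s) := by
        have := hsub s (-s)
        simp only [add_neg_cancel, phi_zero hhom] at this
        linarith
      rw [h1]
      nlinarith
  obtain ⟨gl, hgl1, hgl2⟩ := exists_extension_of_le_sublinear p φ
    (fun c hc v => hhom c hc.le v) hsub hf
  have hs_mem : s ∈ p.domain := Submodule.mem_span_singleton_self s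
  have hgs : gl s = φ s := by
    have h1 : gl s = p ⟨s, hs_mem⟩ := hgl1 ⟨s, hs_mem⟩
    have h2 : p ⟨s, hs_mem⟩ = φ s := by
      have hmem : (1:ℝ) • s ∈ p.domain := by simpa using hs_mem
      have := hpapp 1 hmem
      simpa using this
    rw [h1, h2]
  refine ⟨fun i => gl (Pi.single i 1), ?_, ?_⟩
  · intro v
    have : gl v = ∑ i, gl (Pi.single i 1) * v i := by
      conv_lhs => rw [pi_repr v]
      rw [map_sum]
      simp [mul_comm]
    rw [← this]
    exact hgl2 v
  · have : gl s = ∑ i, gl (Pi.single i 1) * s i := by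
      conv_lhs => rw [pi_repr s]
      rw [map_sum]
      simp [mul_comm]
    rw [← this, hgs]

lemma phi_cover (hnonneg : ∀ v, 0 ≤ φ v)
    (hhom : ∀ l : ℝ, 0 ≤ l → ∀ v, φ (l • v) = l * φ v)
    (hsub : ∀ v w, φ (v + w) ≤ φ v + φ w) {ε : ℝ} (hε : 0 < ε) :
    ∃ A : Finset (Fin n → ℝ),
      (∀ a ∈ A, ∀ v, (∑ i, a i * v i) ≤ φ v) ∧
      (∀ v, ∃ a ∈ A, φ v ≤ (∑ i, a i * v i) + ε * ‖v‖) := by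
  classical
  set C := ∑ i : Fin n, (φ (Pi.single i 1) + φ (-Pi.single i 1)) with hC
  have hC0 : 0 ≤ C :=
    Finset.sum_nonneg fun i _ => add_nonneg (hnonneg _) (hnonneg _)
  have hphiC : ∀ v, φ v ≤ C * ‖v‖ := fun v => phi_le_C hnonneg hhom hsub v
  set δ : ℝ := ε / (2 * C + 1) with hδ
  have h1 : (0:ℝ) < 2 * C + 1 := by linarith
  have hδ0 : 0 < δ := div_pos hε h1
  have h2Cδ : 2 * C * δ ≤ ε := by
    have h2 := (div_le_one h1).2 (by linarith : 2*C ≤ 2*C+1)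
    calc 2*C*δ = (2*C)/(2*C+1)*ε := by rw [hδ]; ring
      _ ≤ 1*ε := mul_le_mul_of_nonneg_right h2 hε.le
      _ = ε := one_mul ε
  have hcomp : IsCompact (Metric.sphere (0 : Fin n → ℝ) 1) := isCompact_sphere _ _
  have hcover : Metric.sphere (0 : Fin n → ℝ) 1 ⊆
      ⋃ s : Metric.sphere (0 : Fin n → ℝ) 1, Metric.ball (s : Fin n → ℝ) δ :=
    fun x hx => Set.mem_iUnion.2 ⟨⟨x, hx⟩, Metric.mem_ball_self hδ0⟩
  obtain ⟨t, ht⟩ := hcomp.elim_finite_subcover _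
    (fun s : Metric.sphere (0 : Fin n → ℝ) 1 => Metric.isOpen_ball) hcover
  have hne : ∀ s : Metric.sphere (0 : Fin n → ℝ) 1, (s : Fin n → ℝ) ≠ 0 := by
    intro s
    have hs : ‖(s : Fin n → ℝ)‖ = 1 := by
      have := s.2
      rwa [mem_sphere_zero_iff_norm] at this
    intro h
    rw [h] at hs
    simp at hs
  choose a ha1 ha2 using fun s : Metric.sphere (0 : Fin n → ℝ) 1 =>
    phi_subgradient hnonneg hhom hsub (s : Fin n → ℝ) (hne s)
  refine ⟨insert 0 (t.image a), ?_, ?_⟩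
  · intro b hb v
    rcases Finset.mem_insert.1 hb with rfl | hb
    · simpa using hnonneg v
    · obtain ⟨s, _, rfl⟩ := Finset.mem_image.1 hb
      exact ha1 s v
  · intro v
    by_cases hv : v = 0
    · exact ⟨0, Finset.mem_insert_self _ _, by simp [hv, phi_zero hhom]⟩
    · have hvn : ‖v‖ ≠ 0 := norm_ne_zero_iff.2 hv
      set u : Fin n → ℝ := ‖v‖⁻¹ • v with hu
      have hun : ‖u‖ = 1 := by
        rw [hu, norm_smul, norm_inv, norm_norm, inv_mul_cancel₀ hvn]
      have humem : u ∈ Metric.sphere (0 : Fin n → ℝ) 1 := by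
        rwa [mem_sphere_zero_iff_norm]
      obtain ⟨s, hst, hball⟩ := Set.mem_iUnion₂.1 (ht humem)
      have hdist : ‖u - (s : Fin n → ℝ)‖ < δ := by
        rw [← dist_eq_norm]; exact Metric.mem_ball.1 hball
      refine ⟨a s, Finset.mem_insert_of_mem (Finset.mem_image_of_mem a hst), ?_⟩
      have e1 : φ u ≤ φ (s : Fin n → ℝ) + C * ‖u - (s : Fin n → ℝ)‖ := by
        have h3 := hsub (s : Fin n → ℝ) (u - (s : Fin n → ℝ))
        rw [add_sub_cancel] at h3
        exact h3.trans (by linarith [hphiC (u - (s : Fin n → ℝ))])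
      have e2 : φ (s : Fin n → ℝ) ≤ ∑ i, a s i * (s : Fin n → ℝ) i := ha2 s
      have e3 : (∑ i, a s i * (s : Fin n → ℝ) i) ≤
          (∑ i, a s i * u i) + C * ‖u - (s : Fin n → ℝ)‖ := by
        have h4 := ha1 s ((s : Fin n → ℝ) - u)
        have h5 : φ ((s : Fin n → ℝ) - u) ≤ C * ‖u - (s : Fin n → ℝ)‖ := by
          rw [norm_sub_rev]; exact hphiC _
        have h6 : (∑ i, a s i * ((s : Fin n → ℝ) - u) i)
            = (∑ i, a s i * (s : Fin n → ℝ) i) - ∑ i, a s i * u i := by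
          rw [← Finset.sum_sub_distrib]
          congr 1; ext i; simp [Pi.sub_apply]; ring
        rw [h6] at h4
        linarith
      have keyu : φ u ≤ (∑ i, a s i * u i) + 2 * C * δ := by
        have hCd : C * ‖u - (s : Fin n → ℝ)‖ ≤ C * δ :=
          mul_le_mul_of_nonneg_left hdist.le hC0
        linarith
      have hvu : v = ‖v‖ • u := (smul_inv_smul₀ hvn v).symm
      have hphiv : φ v = ‖v‖ * φ u := by
        conv_lhs => rw [hvu]
        exact hhom _ (norm_nonneg v) u
      have hvi : ∀ i, v i = ‖v‖ * u i := by
        intro i; conv_lhs => rw [hvu]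
        simp
      calc φ v = ‖v‖ * φ u := hphiv
        _ ≤ ‖v‖ * ((∑ i, a s i * u i) + 2 * C * δ) :=
            mul_le_mul_of_nonneg_left keyu (norm_nonneg v)
        _ = (∑ i, a s i * v i) + (2 * C * δ) * ‖v‖ := by
            rw [mul_add, Finset.mul_sum]
            congr 1
            · exact Finset.sum_congr rfl fun i _ => by rw [hvi i]; ring
            · ring
        _ ≤ (∑ i, a s i * v i) + ε * ‖v‖ := by
            have := mul_le_mul_of_nonneg_right h2Cδ (norm_nonneg v)
            linarith

end Aux

lemma Lp_coeFn_finset_sum {α : Type*} [MeasurableSpace α] {μ : Measure α}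
    {ι : Type*} (s : Finset ι) (F : ι → Lp ℝ 1 μ) :
    ⇑(∑ i ∈ s, F i) =ᵐ[μ] fun x => ∑ i ∈ s, F i x := by
  classical
  induction s using Finset.induction_on with
  | empty => simp only [Finset.sum_empty]; exact Lp.coeFn_zero _ _ _
  | @insert a s ha ih =>
      rw [Finset.sum_insert ha]
      filter_upwards [Lp.coeFn_add (F a) (∑ i ∈ s, F i), ih] with x h1 h2
      rw [h1]
      simp only [Pi.add_apply, Finset.sum_insert ha, h2]

lemma pi_norm_le_sum_abs {n : ℕ} (v : Fin n → ℝ) : ‖v‖ ≤ ∑ i, |v i| := by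
  apply pi_norm_le_iff_of_nonneg (Finset.sum_nonneg fun i _ => abs_nonneg _) |>.2
  intro i
  rw [Real.norm_eq_abs]
  exact Finset.single_le_sum (fun j _ => abs_nonneg (v j)) (Finset.mem_univ i)

lemma aemeasurable_pi_of_ae {α : Type*} [MeasurableSpace α] {μ : Measure α} {n : ℕ}
    {F : Fin n → α → ℝ} (h : ∀ i, AEMeasurable (F i) μ) :
    AEMeasurable (fun x => (fun i => F i x)) μ := by
  choose G hGm hGe using h
  refine ⟨fun x i => G i x, measurable_pi_iff.2 hGm, ?_⟩
  filter_upwards [ae_all_iff.2 hGe] with x hx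
  exact funext fun i => hx i

theorem matrix_majorization_sublinear_inequality
    {n : ℕ} {X Y : Type*} [MeasurableSpace X] [MeasurableSpace Y]
    (μ : Measure X) (ν : Measure Y) [SigmaFinite μ] [SigmaFinite ν]
    (f : Fin n → Lp ℝ 1 μ) (g : Fin n → Lp ℝ 1 ν)
    (hmaj : ∃ S : Lp ℝ 1 ν →ₗ[ℝ] Lp ℝ 1 μ,
      (∀ u : Lp ℝ 1 ν, 0 ≤ u → 0 ≤ S u) ∧
      (∀ u : Lp ℝ 1 ν, ∫ x, S u x ∂μ = ∫ y, u y ∂ν) ∧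
      (∀ i, S (g i) = f i))
    (φ : (Fin n → ℝ) → ℝ)
    (hnonneg : ∀ v, 0 ≤ φ v)
    (hhom : ∀ l : ℝ, 0 ≤ l → ∀ v, φ (l • v) = l * φ v)
    (hsub : ∀ v w, φ (v + w) ≤ φ v + φ w) :
    ∫ x, φ (fun i => f i x) ∂μ ≤ ∫ y, φ (fun i => g i y) ∂ν := by
  classical
  obtain ⟨S, hpos, hSint, himg⟩ := hmaj
  have hfi : ∀ i, Integrable (fun x => f i x) μ := fun i => L1.integrable_coeFn (f i)
  have hgi : ∀ i, Integrable (fun y => g i y) ν := fun i => L1.integrable_coeFn (g i)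
  set C := ∑ i : Fin n, (φ (Pi.single i 1) + φ (-Pi.single i 1)) with hC
  have hC0 : 0 ≤ C :=
    Finset.sum_nonneg fun i _ => add_nonneg (hnonneg _) (hnonneg _)
  have hphiC : ∀ v, φ v ≤ C * ‖v‖ := fun v => phi_le_C hnonneg hhom hsub v
  -- φ is Lipschitz, hence continuous
  have hlip : LipschitzWith ⟨C, hC0⟩ φ := by
    apply LipschitzWith.of_dist_le_mul
    intro v w
    rw [Real.dist_eq, abs_sub_le_iff]
    constructor
    · have h3 := hsub w (v - w)
      rw [add_sub_cancel] at h3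
      have h4 := hphiC (v - w)
      rw [dist_eq_norm]
      calc φ v - φ w ≤ φ (v - w) := by linarith
        _ ≤ C * ‖v - w‖ := h4
        _ = (⟨C, hC0⟩ : NNReal) * ‖v - w‖ := rfl
    · have h3 := hsub v (w - v)
      rw [add_sub_cancel] at h3
      have h4 := hphiC (w - v)
      rw [dist_eq_norm, norm_sub_rev]
      calc φ w - φ v ≤ φ (w - v) := by linarith
        _ ≤ C * ‖w - v‖ := h4
        _ = (⟨C, hC0⟩ : NNReal) * ‖w - v‖ := rfl
  have hcont : Continuous φ := hlip.continuous
  -- integrability of φ ∘ f and φ ∘ g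
  have hbound_f : Integrable (fun x => ∑ i, |f i x|) μ :=
    integrable_finset_sum _ fun i _ => (hfi i).abs
  have hbound_g : Integrable (fun y => ∑ i, |g i y|) ν :=
    integrable_finset_sum _ fun i _ => (hgi i).abs
  have hFaem : AEMeasurable (fun x => (fun i => f i x)) μ :=
    aemeasurable_pi_of_ae fun i => (Lp.aestronglyMeasurable (f i)).aemeasurable
  have hGaem : AEMeasurable (fun y => (fun i => g i y)) ν :=
    aemeasurable_pi_of_ae fun i => (Lp.aestronglyMeasurable (g i)).aemeasurable
  have hφf_int : Integrable (fun x => φ (fun i => f i x)) μ := by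
    apply Integrable.mono' (hbound_f.const_mul C)
      (hcont.measurable.comp_aemeasurable hFaem).aestronglyMeasurable
    filter_upwards with x
    simp only [Function.comp_apply]
    rw [Real.norm_eq_abs, abs_of_nonneg (hnonneg _)]
    exact (hphiC _).trans (mul_le_mul_of_nonneg_left (pi_norm_le_sum_abs _) hC0)
  have hφg_int : Integrable (fun y => φ (fun i => g i y)) ν := by
    apply Integrable.mono' (hbound_g.const_mul C)
      (hcont.measurable.comp_aemeasurable hGaem).aestronglyMeasurable
    filter_upwards with y
    simp only [Function.comp_apply]
    rw [Real.norm_eq_abs, abs_of_nonneg (hnonneg _)]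
    exact (hphiC _).trans (mul_le_mul_of_nonneg_left (pi_norm_le_sum_abs _) hC0)
  have hmem : MemLp (fun y => φ (fun i => g i y)) 1 ν :=
    memLp_one_iff_integrable.2 hφg_int
  set H : Lp ℝ 1 ν := hmem.toLp _ with hH
  -- reduce to ε-approximation
  refine le_of_forall_pos_le_add fun ε hε => ?_
  set M := ∑ i : Fin n, ∫ x, |f i x| ∂μ with hM
  have hM0 : 0 ≤ M :=
    Finset.sum_nonneg fun i _ => integral_nonneg fun x => abs_nonneg _
  set ε0 := ε / (M + 1) with hε0
  have hε0pos : 0 < ε0 := div_pos hε (by linarith)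
  obtain ⟨A, hA1, hA2⟩ := phi_cover hnonneg hhom hsub hε0pos
  have key : ∀ a ∈ A, ∀ᵐ x ∂μ, (∑ i, a i * f i x) ≤ (S H) x := by
    intro a ha
    set ua : Lp ℝ 1 ν := ∑ i, a i • g i with hua
    have hua_coe : ⇑ua =ᵐ[ν] fun y => ∑ i, a i * g i y := by
      have h2 : ∀ᵐ y ∂ν, ∀ i : Fin n, (a i • g i) y = a i * g i y := by
        rw [ae_all_iff]
        intro i
        filter_upwards [Lp.coeFn_smul (a i) (g i)] with y hy
        rw [hy]; simp
      filter_upwards [Lp_coeFn_finset_sum Finset.univ (fun i => a i • g i), h2]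
        with y hy1 hy2
      exact hy1.trans (Finset.sum_congr rfl fun i _ => hy2 i)
    have hle : ua ≤ H := by
      rw [← Lp.coeFn_le]
      filter_upwards [hua_coe, hmem.coeFn_toLp] with y hy1 hy2
      rw [hy1, hH, hy2]
      exact hA1 a ha _
    have hSle : S ua ≤ S H := by
      have h0 : (0 : Lp ℝ 1 ν) ≤ H - ua := sub_nonneg.2 hle
      have := hpos _ h0
      rw [map_sub] at this
      exact sub_nonneg.1 this
    have hSua : S ua = ∑ i, a i • f i := by
      rw [hua, map_sum]
      exact Finset.sum_congr rfl fun i _ => by rw [LinearMap.map_smul, himg i]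
    have hcoe : ⇑(S ua) =ᵐ[μ] fun x => ∑ i, a i * f i x := by
      rw [hSua]
      have h2 : ∀ᵐ x ∂μ, ∀ i : Fin n, (a i • f i) x = a i * f i x := by
        rw [ae_all_iff]
        intro i
        filter_upwards [Lp.coeFn_smul (a i) (f i)] with x hx
        rw [hx]; simp
      filter_upwards [Lp_coeFn_finset_sum Finset.univ (fun i => a i • f i), h2]
        with x hx1 hx2
      rw [hx1]
      exact Finset.sum_congr rfl fun i _ => hx2 i
    have hae := (Lp.coeFn_le _ _).2 hSle
    filter_upwards [hcoe, hae] with x h1 h2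
    rw [← h1]
    exact h2
  have keyall : ∀ᵐ x ∂μ, ∀ a ∈ A, (∑ i, a i * f i x) ≤ (S H) x := by
    have h := ae_all_iff.2 fun a : {a // a ∈ A} => key a.1 a.2
    filter_upwards [h] with x hx a ha
    exact hx ⟨a, ha⟩
  have pointwise : ∀ᵐ x ∂μ,
      φ (fun i => f i x) ≤ (S H) x + ε0 * ∑ i, |f i x| := by
    filter_upwards [keyall] with x hx
    obtain ⟨a, ha, hav⟩ := hA2 (fun i => f i x)
    have h1 := hx a ha
    have h2 : ‖(fun i => f i x)‖ ≤ ∑ i, |f i x| := pi_norm_le_sum_abs _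
    have h3 := mul_le_mul_of_nonneg_left h2 hε0pos.le
    calc φ (fun i => f i x) ≤ (∑ i, a i * f i x) + ε0 * ‖(fun i => f i x)‖ := hav
      _ ≤ (S H) x + ε0 * ∑ i, |f i x| := by linarith
  have hSH_int : Integrable (fun x => (S H) x) μ := L1.integrable_coeFn _
  have hRHS_int : Integrable (fun x => (S H) x + ε0 * ∑ i, |f i x|) μ :=
    hSH_int.add (hbound_f.const_mul ε0)
  have hint := integral_mono_ae hφf_int hRHS_int pointwise
  have heq1 : ∫ x, ((S H) x + ε0 * ∑ i, |f i x|) ∂μ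
      = (∫ y, φ (fun i => g i y) ∂ν) + ε0 * M := by
    rw [integral_add hSH_int (hbound_f.const_mul ε0)]
    congr 1
    · rw [hSint H]
      exact integral_congr_ae hmem.coeFn_toLp
    · rw [integral_const_mul, integral_finset_sum _ fun i _ => (hfi i).abs]
  have hfinal : ε0 * M ≤ ε := by
    rw [hε0]
    have h1 : (0:ℝ) < M + 1 := by linarith
    have h2 := (div_le_one h1).2 (by linarith : M ≤ M + 1)
    calc ε / (M + 1) * M = M / (M + 1) * ε := by ring
      _ ≤ 1 * ε := mul_le_mul_of_nonneg_right h2 hε.le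
      _ = ε := one_mul ε
  calc ∫ x, φ (fun i => f i x) ∂μ
      ≤ ∫ x, ((S H) x + ε0 * ∑ i, |f i x|) ∂μ := hint
    _ = (∫ y, φ (fun i => g i y) ∂ν) + ε0 * M := heq1
    _ ≤ (∫ y, φ (fun i => g i y) ∂ν) + ε := by linarith
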